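/- Let Q be a lower transition rate operator on a finite nonempty set 𝒳, let t ≥ 0, and let Γ : [0,t] → 𝓛(𝒳) be continuously differentiable with (d/ds)Γ(s) ≥ Q(Γ(s)) pointwise for all s ∈ [0,t]. Then min Γ(t) ≥ min Γ(0). -/

import Mathlib

open Filter Topology

/-- The minimum of a real-valued function on a finite nonempty type. -/
noncomputable def minf {X : Type*} [Fintype X] [Nonempty X] (f : X → ℝ) : ℝ :=
  Finset.univ.inf' Finset.univ_nonempty f

/-- The maximum of a real-valued function on a finite nonempty type. -/
noncomputable def maxf {X : Type*} [Fintype X] [Nonempty X] (f : X → ℝ) : ℝ :=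
  Finset.univ.sup' Finset.univ_nonempty f

/-- The (real-valued) indicator function of a set. -/
noncomputable def ind {X : Type*} (A : Set X) : X → ℝ := A.indicator 1

/-- The conjugate (upper) operator `f ↦ -(Q (-f))`. -/
def conjOp {X : Type*} (Q : (X → ℝ) → (X → ℝ)) : (X → ℝ) → (X → ℝ) :=
  fun f => -(Q (-f))

/-- A lower transition rate operator. -/
def IsLTRO {X : Type*} [Fintype X] (Q : (X → ℝ) → (X → ℝ)) : Prop :=
  (∀ μ : ℝ, Q (fun _ => μ) = 0) ∧
  (∀ f g : X → ℝ, Q f + Q g ≤ Q (f + g)) ∧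
  (∀ l : ℝ, 0 ≤ l → ∀ f : X → ℝ, Q (l • f) = l • Q f) ∧
  (∀ x y : X, x ≠ y → 0 ≤ Q (ind {y}) x)

/-- A lower transition operator. -/
def IsLTO {X : Type*} [Fintype X] [Nonempty X] (T : (X → ℝ) → (X → ℝ)) : Prop :=
  (∀ f : X → ℝ, ∀ x : X, minf f ≤ T f x) ∧
  (∀ f g : X → ℝ, T f + T g ≤ T (f + g)) ∧
  (∀ l : ℝ, 0 ≤ l → ∀ f : X → ℝ, T (l • f) = l • T f)

/-- `T` is the family of operators solving `d/dt T_t f = Q (T_t f)` on `[0,∞)`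
with `T_0 f = f`. -/
def IsSol {X : Type*} [Fintype X] (Q : (X → ℝ) → (X → ℝ))
    (T : ℝ → (X → ℝ) → (X → ℝ)) : Prop :=
  (∀ f : X → ℝ, T 0 f = f) ∧
  (∀ f : X → ℝ, ∀ t : ℝ, 0 ≤ t →
    HasDerivWithinAt (fun s => T s f) (Q (T t f)) (Set.Ici 0) t)

/-- Ergodicity of a lower transition rate operator, expressed via its
associated time-dependent family `T`. -/
def ErgodicQ {X : Type*} [Fintype X] (T : ℝ → (X → ℝ) → (X → ℝ)) : Prop :=
  ∀ f : X → ℝ, ∃ c : ℝ, Tendsto (fun t => T t f) atTop (𝓝 (fun _ : X => c))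

/-- Ergodicity of a lower transition operator. -/
def ErgodicT {X : Type*} [Fintype X] (T : (X → ℝ) → (X → ℝ)) : Prop :=
  ∀ f : X → ℝ, ∃ c : ℝ, Tendsto (fun n : ℕ => T^[n] f) atTop (𝓝 (fun _ : X => c))

/-- `x` is upper reachable from `y` (w.r.t. the lower transition rate operator `Q`). -/
def upperReach {X : Type*} [Fintype X] (Q : (X → ℝ) → (X → ℝ)) (y x : X) : Prop :=
  ∃ (n : ℕ) (p : ℕ → X), p 0 = y ∧ p n = x ∧
    ∀ k : ℕ, k < n → p (k + 1) ≠ p k ∧ 0 < conjOp Q (ind {p (k + 1)}) (p k)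

/-- One step of the lower-reachability construction: `A ↦ A ∪ {y ∉ A : Q(𝟙_A)(y) > 0}`. -/
def lowerStep {X : Type*} [Fintype X] (Q : (X → ℝ) → (X → ℝ)) (A : Set X) : Set X :=
  A ∪ {y : X | y ∉ A ∧ 0 < Q (ind A) y}

/-- `A` is lower reachable from `x`: `x ∈ Aₙ` where `n` is the first index with
`Aₙ = Aₙ₊₁` (equivalently, any such index, since the sequence is determined by
recursion and increasing). -/
def lowerReach {X : Type*} [Fintype X] (Q : (X → ℝ) → (X → ℝ)) (x : X) (A : Set X) : Prop :=
  ∃ n : ℕ, (lowerStep Q)^[n] A = (lowerStep Q)^[n + 1] A ∧ x ∈ (lowerStep Q)^[n] A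

/-- The set `𝒳_RA := {x : ∃ n ≥ 1, min T̄ⁿ 𝟙ₓ > 0}`. -/
noncomputable def XRA {X : Type*} [Fintype X] [Nonempty X]
    (T : (X → ℝ) → (X → ℝ)) : Set X :=
  {x : X | ∃ n : ℕ, 0 < minf ((conjOp T)^[n + 1] (ind {x}))}

/-- A regularly absorbing lower transition operator. -/
def RegAbs {X : Type*} [Fintype X] [Nonempty X] (T : (X → ℝ) → (X → ℝ)) : Prop :=
  (XRA T).Nonempty ∧ ∀ x : X, x ∉ XRA T → ∃ n : ℕ, 0 < T^[n + 1] (ind (XRA T)) x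

/-- The set `𝒳_1A := {x : min T̄ 𝟙ₓ > 0}`. -/
noncomputable def X1A {X : Type*} [Fintype X] [Nonempty X]
    (T : (X → ℝ) → (X → ℝ)) : Set X :=
  {x : X | 0 < minf (conjOp T (ind {x}))}

/-- A 1-step absorbing lower transition operator. -/
def OneStepAbs {X : Type*} [Fintype X] [Nonempty X] (T : (X → ℝ) → (X → ℝ)) : Prop :=
  (X1A T).Nonempty ∧ ∀ x : X, x ∉ X1A T → 0 < T (ind (X1A T)) x

/-- The operator (sup) norm of a non-negatively homogeneous operator. -/
noncomputable def opN {X : Type*} [Fintype X] (Q : (X → ℝ) → (X → ℝ)) : ℝ :=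
  sSup {r : ℝ | ∃ f : X → ℝ, ‖f‖ = 1 ∧ r = ‖Q f‖}

/-- If `Γ : [0,t] → 𝓛(𝒳)` is continuously differentiable and
`(d/ds)Γ(s) ≥ Q(Γ(s))` on `[0,t]`, then `min Γ(t) ≥ min Γ(0)`. -/
theorem stmt16 {X : Type*} [Fintype X] [Nonempty X]
    (Q : (X → ℝ) → (X → ℝ)) (hQ : IsLTRO Q)
    (t : ℝ) (ht : 0 ≤ t) (Γ Γ' : ℝ → X → ℝ)
    (hderiv : ∀ s ∈ Set.Icc 0 t, HasDerivWithinAt Γ (Γ' s) (Set.Icc 0 t) s)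
    (hcont : ContinuousOn Γ' (Set.Icc 0 t))
    (hineq : ∀ s ∈ Set.Icc 0 t, Q (Γ s) ≤ Γ' s) :
    minf (Γ 0) ≤ minf (Γ t) := by
  classical
  obtain ⟨hQc, hQadd, hQhom, hQoff⟩ := hQ
  have hQ0 : Q 0 = 0 := by exact hQc 0
  -- superadditivity over finite sums
  have hQsum : ∀ (s : Finset X) (u : X → X → ℝ),
      (∑ y ∈ s, Q (u y)) ≤ Q (∑ y ∈ s, u y) := by
    intro s u
    induction s using Finset.induction with
    | empty => simp [hQ0]
    | @insert a s' ha ih =>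
        rw [Finset.sum_insert ha, Finset.sum_insert ha]
        calc Q (u a) + ∑ y ∈ s', Q (u y) ≤ Q (u a) + Q (∑ y ∈ s', u y) :=
              add_le_add (le_refl _) ih
          _ ≤ Q (u a + ∑ y ∈ s', u y) := hQadd _ _
  -- key coercivity lemma
  have key : ∀ (f : X → ℝ) (x : X), (f x - minf f) * Q (ind {x}) x ≤ Q f x := by
    intro f x
    set c := minf f with hc
    have hgen : ∀ y, c ≤ f y := fun y => Finset.inf'_le _ (Finset.mem_univ y)
    set g : X → ℝ := fun y => f y - c with hg
    have hg0 : ∀ y, 0 ≤ g y := fun y => sub_nonneg.2 (hgen y)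
    have hdecomp : (∑ y : X, g y • ind ({y} : Set X)) = g := by
      funext z
      simp only [Finset.sum_apply, Pi.smul_apply, ind, Set.indicator_apply,
        Set.mem_singleton_iff, Pi.one_apply, smul_eq_mul]
      rw [Finset.sum_congr rfl (fun y _ => by rw [mul_ite, mul_one, mul_zero])]
      simp [eq_comm]
    have h1 : (∑ y : X, g y • Q (ind ({y} : Set X))) ≤ Q g := by
      calc (∑ y : X, g y • Q (ind ({y} : Set X)))
          = ∑ y : X, Q (g y • ind ({y} : Set X)) :=
            Finset.sum_congr rfl fun y _ => (hQhom (g y) (hg0 y) _).symm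
        _ ≤ Q (∑ y : X, g y • ind ({y} : Set X)) := hQsum _ _
        _ = Q g := by rw [hdecomp]
    have h2 : Q g ≤ Q f := by
      have h := hQadd g (fun _ => c)
      have hgc : g + (fun _ => c) = f := by funext z; simp [hg]
      rw [hgc, hQc c, add_zero] at h
      exact h
    have h3 : g x * Q (ind ({x} : Set X)) x ≤ (∑ y : X, g y • Q (ind ({y} : Set X))) x := by
      have hrw : (∑ y : X, g y • Q (ind ({y} : Set X))) x
          = ∑ y : X, g y * Q (ind ({y} : Set X)) x := by
        simp [Finset.sum_apply]
      rw [hrw, ← Finset.add_sum_erase _ _ (Finset.mem_univ x)]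
      have hnn : 0 ≤ ∑ y ∈ Finset.univ.erase x, g y * Q (ind ({y} : Set X)) x :=
        Finset.sum_nonneg fun y hy =>
          mul_nonneg (hg0 y) (hQoff x y (Finset.ne_of_mem_erase hy).symm)
      linarith
    have := le_trans h3 (le_trans (h1 x) (h2 x))
    simpa [hg] using this
  -- the function F
  set F : ℝ → ℝ := fun s => -minf (Γ s) with hFdef
  have hFx : ∀ s x, -Γ s x ≤ F s := fun s x =>
    neg_le_neg (Finset.inf'_le _ (Finset.mem_univ x))
  have hFex : ∀ s, ∃ x : X, F s = -Γ s x := by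
    intro s
    obtain ⟨x, -, hx⟩ := Finset.exists_mem_eq_inf' (Finset.univ_nonempty (α := X)) (Γ s)
    exact ⟨x, by simp [hFdef, minf, ← hx]⟩
  have hΓcont : ContinuousOn Γ (Set.Icc 0 t) := fun s hs =>
    (hderiv s hs).continuousWithinAt
  have hΓxcont : ∀ x : X, ContinuousOn (fun s => Γ s x) (Set.Icc 0 t) := fun x =>
    (continuous_apply x).comp_continuousOn hΓcont
  -- continuity of min
  have finf_cont : ∀ (S : Finset X) (hS : S.Nonempty),
      ContinuousOn (fun s => S.inf' hS (Γ s)) (Set.Icc 0 t) := by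
    intro S hS
    induction hS using Finset.Nonempty.cons_induction with
    | singleton x => simpa using hΓxcont x
    | cons x S hx hS ih =>
        refine ContinuousOn.congr ((hΓxcont x).inf ih) fun s _ => ?_
        exact (Finset.inf'_cons hS (Γ s)).symm ▸ rfl
  have hFcont : ContinuousOn F (Set.Icc 0 t) :=
    (finf_cont Finset.univ Finset.univ_nonempty).neg
  -- main liminf slope estimate
  have hf' : ∀ s ∈ Set.Ico 0 t, ∀ r : ℝ, (0:ℝ) < r →
      ∃ᶠ z in 𝓝[>] s, slope F s z < r := by
    intro s hs r hr
    by_contra hcon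
    rw [Filter.not_frequently] at hcon
    obtain ⟨u, hu, hIoo⟩ := mem_nhdsGT_iff_exists_Ioo_subset.1 hcon
    set b := min u t with hb
    have hsb : s < b := lt_min hu hs.2
    set S : X → Set ℝ := fun x => {z ∈ Set.Ioo s b | F z = -Γ z x} with hSdef
    have hsubset : Set.Ioo s b ⊆ ⋃ x : X, closure (S x) := by
      intro z hz
      obtain ⟨x, hx⟩ := hFex z
      exact Set.mem_iUnion.2 ⟨x, subset_closure ⟨hz, hx⟩⟩
    have hclosed : IsClosed (⋃ x : X, closure (S x)) :=
      isClosed_iUnion_of_finite fun x => isClosed_closure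
    have hsmem : s ∈ ⋃ x : X, closure (S x) := by
      have h1 : closure (Set.Ioo s b) ⊆ ⋃ x : X, closure (S x) :=
        closure_minimal hsubset hclosed
      exact h1 (by rw [closure_Ioo hsb.ne]; exact ⟨le_rfl, hsb.le⟩)
    obtain ⟨x₀, hx₀⟩ := Set.mem_iUnion.1 hsmem
    have hsIcc : s ∈ Set.Icc 0 t := ⟨hs.1, hs.2.le⟩
    have hSsub : S x₀ ⊆ Set.Icc 0 t \ {s} := by
      rintro z ⟨⟨hz1, hz2⟩, -⟩
      exact ⟨⟨hs.1.trans hz1.le, hz2.le.trans (min_le_right u t)⟩, fun h => hz1.ne' (Set.mem_singleton_iff.1 h)⟩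
    -- F s = -Γ s x₀ by continuity
    have hGcont : ContinuousWithinAt (fun z => F z + Γ z x₀) (S x₀) s := by
      refine ContinuousWithinAt.mono ?_ (hSsub.trans Set.diff_subset)
      exact ((hFcont s hsIcc).add ((hΓxcont x₀) s hsIcc))
    have hFs : F s = -Γ s x₀ := by
      have himg : (fun z => F z + Γ z x₀) s ∈
          closure ((fun z => F z + Γ z x₀) '' S x₀) :=
        hGcont.mem_closure_image hx₀
      have himg0 : (fun z => F z + Γ z x₀) '' S x₀ ⊆ ({0} : Set ℝ) := by
        rintro w ⟨z, ⟨-, hz⟩, rfl⟩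
        simp [hz]
      have : F s + Γ s x₀ = 0 := by
        have := closure_mono himg0 himg
        simpa using this
      linarith
    -- x₀ is an argmin, so Γ' s x₀ ≥ 0
    have hargmin : Γ s x₀ = minf (Γ s) := by
      have := hFs; simp only [hFdef] at this; linarith
    have hQpos : 0 ≤ Q (Γ s) x₀ := by
      have := key (Γ s) x₀
      rw [hargmin, sub_self, zero_mul] at this
      exact this
    have hΓ'pos : 0 ≤ Γ' s x₀ := hQpos.trans (hineq s hsIcc x₀)
    -- derivative of -Γ · x₀
    have hderx : HasDerivWithinAt (fun z => -Γ z x₀) (-Γ' s x₀) (Set.Icc 0 t) s :=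
      ((hasDerivWithinAt_pi.1 (hderiv s hsIcc)) x₀).neg
    have htend : Filter.Tendsto (slope (fun z => -Γ z x₀) s) (𝓝[S x₀] s)
        (𝓝 (-Γ' s x₀)) :=
      (hasDerivWithinAt_iff_tendsto_slope.1 hderx).mono_left
        (nhdsWithin_mono s hSsub)
    have hneBot : (𝓝[S x₀] s).NeBot := mem_closure_iff_nhdsWithin_neBot.1 hx₀
    have hslope : ∀ z ∈ S x₀, r ≤ slope (fun z => -Γ z x₀) s z := by
      rintro z ⟨hz1, hz2⟩
      have hzIoo : z ∈ Set.Ioo s u := ⟨hz1.1, hz1.2.trans_le (min_le_left u t)⟩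
      have hrs : r ≤ slope F s z := not_lt.1 (hIoo hzIoo)
      have : slope F s z = slope (fun z => -Γ z x₀) s z := by
        rw [slope_def_field, slope_def_field, hz2, hFs]
      linarith [this ▸ hrs]
    have hle : r ≤ -Γ' s x₀ :=
      ge_of_tendsto htend (eventually_nhdsWithin_of_forall hslope)
    linarith
  -- fencing
  have hfence : ∀ x ∈ Set.Icc 0 t, F x ≤ F 0 :=
    image_le_of_liminf_slope_right_le_deriv_boundary (B := fun _ => F 0)
      (B' := fun _ => 0) hFcont le_rfl continuousOn_const
      (fun x _ => hasDerivWithinAt_const x _ (F 0))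
      (fun x hx r hr => hf' x hx r hr)
  have : F t ≤ F 0 := hfence t ⟨ht, le_rfl⟩
  simpa [hFdef] using neg_le_neg_iff.1 this
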